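/- Let A be an m × n real matrix with m ≤ n having full row rank, set Ã = A/√λ_max(AAᵀ) and κ(A) = λ_min(AAᵀ)/λ_max(AAᵀ). Let g₀, g₁ ∈ ℝ^m satisfy g₀ᵀ(ÃÃᵀ)g₁ = 0. Then g₀ᵀg₁ ≤ (1 − κ(A))·‖g₀‖·‖g₁‖, and moreover 0 ≤ 1 − κ(A) < 1. -/

import Mathlib

open scoped RealInnerProductSpace Matrix

/-- The largest eigenvalue of a Hermitian real matrix. -/
noncomputable def lamMax {m : ℕ} {M : Matrix (Fin m) (Fin m) ℝ} (hM : M.IsHermitian) : ℝ :=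
  ⨆ i, hM.eigenvalues i

/-- The smallest eigenvalue of a Hermitian real matrix. -/
noncomputable def lamMin {m : ℕ} {M : Matrix (Fin m) (Fin m) ℝ} (hM : M.IsHermitian) : ℝ :=
  ⨅ i, hM.eigenvalues i

/-- **Relaxed orthogonality.** For `A` an `m × n` matrix (`m ≤ n`) of full row rank,
`Ã = A/√λ_max(AAᵀ)` and `κ(A) = λ_min(AAᵀ)/λ_max(AAᵀ)`, if `g₀ᵀ(ÃÃᵀ)g₁ = 0` then
`g₀ᵀg₁ ≤ (1 − κ(A))‖g₀‖‖g₁‖`, and `0 ≤ 1 − κ(A) < 1`.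
(Over `ℝ`, the conjugate transpose `Aᴴ` coincides with the transpose `Aᵀ`.) -/
theorem relaxed_orthogonality_of_normalized_matrix
    {m n : ℕ} (hm : 0 < m) (hmn : m ≤ n)
    (A : Matrix (Fin m) (Fin n) ℝ) (hrank : A.rank = m)
    (At : Matrix (Fin m) (Fin n) ℝ)
    (hAt : At = (Real.sqrt (lamMax (Matrix.isHermitian_mul_conjTranspose_self A)))⁻¹ • A)
    (κA : ℝ) (hκA : κA = lamMin (Matrix.isHermitian_mul_conjTranspose_self A) /
      lamMax (Matrix.isHermitian_mul_conjTranspose_self A))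
    (g0 g1 : EuclideanSpace ℝ (Fin m))
    (horth : ⟪g0, Matrix.toEuclideanLin (At * Atᴴ) g1⟫ = 0) :
    ⟪g0, g1⟫ ≤ (1 - κA) * ‖g0‖ * ‖g1‖ ∧ 0 ≤ 1 - κA ∧ 1 - κA < 1 := by
  have : Nonempty (Fin m) := ⟨⟨0, hm⟩⟩
  set hM := Matrix.isHermitian_mul_conjTranspose_self A with hMh
  set lam := hM.eigenvalues with hlam
  set L := lamMax hM with hL
  set ℓ := lamMin hM with hℓ
  -- eigenvalue positivity
  have hpos : ∀ i, 0 < lam i := by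
    have hMrank : (A * Aᴴ).rank = m := by rw [Matrix.rank_self_mul_conjTranspose, hrank]
    have hdet : (A * Aᴴ).det ≠ 0 := by
      intro h
      obtain ⟨v, hv, hMv⟩ := (Matrix.exists_mulVec_eq_zero_iff).2 h
      have hr : LinearMap.range (A * Aᴴ).mulVecLin = ⊤ := by
        apply Submodule.eq_top_of_finrank_eq
        rw [← Matrix.rank, hMrank]; simp
      have hinj : Function.Injective (A * Aᴴ).mulVecLin :=
        (LinearMap.injective_iff_surjective).2 (LinearMap.range_eq_top.1 hr)
      exact hv (hinj (show (A * Aᴴ).mulVecLin v = (A * Aᴴ).mulVecLin 0 by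
        simp only [Matrix.mulVecLin_apply, hMv, Matrix.mulVec_zero]))
    intro i
    rcases (Matrix.eigenvalues_self_mul_conjTranspose_nonneg A i).lt_or_eq with h | h
    · exact h
    · exact absurd (hM.det_eq_prod_eigenvalues.trans
        (Finset.prod_eq_zero (Finset.mem_univ i) h.symm)) hdet
  -- bounds on L and ℓ
  have hle : ∀ i, lam i ≤ L := fun i => le_ciSup (Set.Finite.bddAbove (Set.finite_range _)) i
  have hge : ∀ i, ℓ ≤ lam i := fun i => ciInf_le (Set.Finite.bddBelow (Set.finite_range _)) i
  have hLpos : 0 < L := lt_of_lt_of_le (hpos (Classical.arbitrary _)) (hle _)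
  have hℓpos : 0 < ℓ := by
    obtain ⟨i, hi⟩ := exists_eq_ciInf_of_finite (f := lam)
    rw [hℓ, lamMin, ← hi]; exact hi ▸ (hi ▸ hpos i)
  have hℓL : ℓ ≤ L := le_trans (hge (Classical.arbitrary _)) (hle _)
  have hκpos : 0 < κA := by rw [hκA]; exact div_pos hℓpos hLpos
  have hκle : κA ≤ 1 := by rw [hκA]; exact div_le_one_of_le₀ hℓL hLpos.le
  refine ⟨?_, by linarith, by linarith⟩
  -- orthogonality w.r.t. M
  have hAtn : At * Atᴴ = L⁻¹ • (A * Aᴴ) := by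
    rw [hAt, Matrix.conjTranspose_smul, Matrix.smul_mul, Matrix.mul_smul, smul_smul]
    congr 1
    simp [RCLike.conj_to_real, ← mul_inv, Real.mul_self_sqrt hLpos.le]
  have horthM : ⟪g0, Matrix.toEuclideanLin (A * Aᴴ) g1⟫ = 0 := by
    rw [hAtn, map_smul] at horth
    have := horth
    rw [LinearMap.smul_apply, inner_smul_right] at this
    rcases mul_eq_zero.1 this with h | h
    · exact absurd h (inv_ne_zero hLpos.ne')
    · exact h
  set b := hM.eigenvectorBasis with hb
  have hTb : ∀ j, Matrix.toEuclideanLin (A * Aᴴ) (b j) = lam j • b j := by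
    intro j
    ext i
    exact congrFun (hM.mulVec_eigenvectorBasis j) i
  set a := fun j => ⟪b j, g0⟫ with ha
  set c := fun j => ⟪b j, g1⟫ with hc
  have hsum1 : ⟪g0, g1⟫ = ∑ j, a j * c j := by
    rw [← b.sum_inner_mul_inner g0 g1]
    refine Finset.sum_congr rfl fun j _ => ?_
    simp only [ha, hc, real_inner_comm (b j) g0]
  have hsum2 : ⟪g0, Matrix.toEuclideanLin (A * Aᴴ) g1⟫ = ∑ j, lam j * (a j * c j) := by
    conv_lhs => rw [← b.sum_repr' g1]
    rw [map_sum, inner_sum]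
    refine Finset.sum_congr rfl fun j _ => ?_
    rw [map_smul, hTb j, smul_smul, real_inner_smul_right]
    simp only [ha, hc, real_inner_comm (b j) g0, real_inner_comm (b j) g1]
    ring
  have h0 : ∑ j, lam j * (a j * c j) = 0 := by rw [← hsum2, horthM]
  have hnorm : ∀ (g : EuclideanSpace ℝ (Fin m)),
      ‖g‖ = Real.sqrt (∑ j, (⟪b j, g⟫ : ℝ)^2) := by
    intro g
    rw [← b.repr.norm_map g, EuclideanSpace.norm_eq]
    congr 1
    refine Finset.sum_congr rfl fun j _ => ?_
    rw [b.repr_apply_apply, Real.norm_eq_abs, sq_abs]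
  have hCS : ∑ j, |a j| * |c j| ≤ ‖g0‖ * ‖g1‖ := by
    have h := real_inner_le_norm ((WithLp.equiv 2 (Fin m → ℝ)).symm (fun j => |a j|))
      ((WithLp.equiv 2 (Fin m → ℝ)).symm (fun j => |c j|))
    rw [EuclideanSpace.norm_eq, EuclideanSpace.norm_eq] at h
    simp only [WithLp.equiv_symm_apply, WithLp.ofLp_toLp, Real.norm_eq_abs, abs_abs, sq_abs] at h
    have hip : (⟪((WithLp.equiv 2 (Fin m → ℝ)).symm fun j => |a j|),
        ((WithLp.equiv 2 (Fin m → ℝ)).symm fun j => |c j|)⟫ : ℝ) = ∑ j, |a j| * |c j| := by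
      simp [PiLp.inner_apply, RCLike.inner_apply]
      exact Finset.sum_congr rfl fun _ _ => mul_comm _ _
    calc ∑ j, |a j| * |c j| = _ := hip.symm
      _ ≤ Real.sqrt (∑ j, (a j)^2) * Real.sqrt (∑ j, (c j)^2) := h
      _ = ‖g0‖ * ‖g1‖ := by rw [hnorm g0, hnorm g1]
  have key : ⟪g0, g1⟫ = ∑ j, (1 - lam j / L) * (a j * c j) := by
    have heq : ∑ j, (1 - lam j / L) * (a j * c j)
        = ∑ j, (a j * c j) - L⁻¹ * ∑ j, lam j * (a j * c j) := by
      rw [Finset.mul_sum, ← Finset.sum_sub_distrib]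
      refine Finset.sum_congr rfl fun j _ => ?_
      field_simp
    rw [heq, h0, hsum1]
    ring
  calc ⟪g0, g1⟫ = ∑ j, (1 - lam j / L) * (a j * c j) := key
    _ ≤ ∑ j, (1 - κA) * (|a j| * |c j|) := by
        refine Finset.sum_le_sum fun j _ => ?_
        have h1 : 0 ≤ 1 - lam j / L := by
          rw [sub_nonneg]; exact div_le_one_of_le₀ (hle j) hLpos.le
        have h2 : 1 - lam j / L ≤ 1 - κA := by
          rw [hκA]; gcongr; exact hge j
        calc (1 - lam j / L) * (a j * c j) ≤ (1 - lam j / L) * |a j * c j| :=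
              mul_le_mul_of_nonneg_left (le_abs_self _) h1
          _ ≤ (1 - κA) * |a j * c j| := mul_le_mul_of_nonneg_right h2 (abs_nonneg _)
          _ = (1 - κA) * (|a j| * |c j|) := by rw [abs_mul]
    _ = (1 - κA) * ∑ j, |a j| * |c j| := by rw [Finset.mul_sum]
    _ ≤ (1 - κA) * (‖g0‖ * ‖g1‖) :=
        mul_le_mul_of_nonneg_left hCS (by linarith)
    _ = (1 - κA) * ‖g0‖ * ‖g1‖ := by ring
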